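/- Let (R, m) be the perfection of a noetherian local F_p-algebra (R₀, m₀). If M₀ is an R₀[φ]-module that is non-nilpotent and simple, then its perfection M₀^perf is a nonzero simple R[φ]-module. -/
import Mathlib



/-- An `R[φ]`-module structure on an `R`-module `M` over an `𝔽_p`-algebra `R`:
an additive map `φ : M → M` satisfying `φ (a • m) = a ^ p • φ m`. -/
structure FrobMod (p : ℕ) (R : Type) [CommRing R] (M : Type) [AddCommGroup M] [Module R M] where
  φ : M →+ M
  semilinear : ∀ (a : R) (m : M), φ (a • m) = a ^ p • φ m

namespace FrobMod

variable {p : ℕ} {R : Type} [CommRing R] {M : Type} [AddCommGroup M] [Module R M]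

/-- An `R[φ]`-module is nilpotent if some power of `φ` is zero. -/
def IsNilpotentMod (F : FrobMod p R M) : Prop :=
  ∃ e : ℕ, ∀ m : M, F.φ^[e] m = 0

/-- A submodule is an `R[φ]`-submodule if it is stable under `φ`. -/
def IsStable (F : FrobMod p R M) (N : Submodule R M) : Prop :=
  ∀ m ∈ N, F.φ m ∈ N

/-- An `R[φ]`-module is simple if it is nonzero and has no nontrivial `φ`-stable submodules. -/
def IsSimpleMod (F : FrobMod p R M) : Prop :=
  (∃ m : M, m ≠ 0) ∧ ∀ N : Submodule R M, F.IsStable N → N = ⊥ ∨ N = ⊤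

/-- An `R[φ]`-module has finite length if there is a uniform bound on the lengths of
strictly increasing chains of `φ`-stable submodules. -/
def HasFiniteLength (F : FrobMod p R M) : Prop :=
  ∃ n : ℕ, ∀ (m : ℕ) (c : Fin m → Submodule R M),
    (∀ i, F.IsStable (c i)) → StrictMono c → m ≤ n

end FrobMod

/-- `g : R₀ →+* R` exhibits `R` as the (direct limit) perfection of `R₀`:
`R` is perfect, every element of `R` has a `p`-power landing in the image of `R₀`, and the
kernel of `g` consists exactly of the nilpotent elements. -/
structure IsRingPerfection (p : ℕ) {R₀ R : Type} [CommRing R₀] [CommRing R]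
    (g : R₀ →+* R) : Prop where
  perfect : Function.Bijective fun x : R => x ^ p
  colim : ∀ x : R, ∃ (n : ℕ) (y : R₀), x ^ p ^ n = g y
  ker : ∀ y : R₀, g y = 0 ↔ ∃ n : ℕ, y ^ p ^ n = 0

/-- `ι : M →ₗ[R] P` exhibits `(P, F)` as the Frobenius perfection
`colim (M → φ_*M → φ_*²M → ⋯)` of the `R[φ]`-module `(M, F₀)`, within `R[φ]`-modules. -/
structure IsFrobPerfection (p : ℕ) {R : Type} [CommRing R] {M P : Type}
    [AddCommGroup M] [Module R M] [AddCommGroup P] [Module R P]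
    (F₀ : FrobMod p R M) (F : FrobMod p R P) (ι : M →ₗ[R] P) : Prop where
  bijective : Function.Bijective F.φ
  comm : ∀ m, ι (F₀.φ m) = F.φ (ι m)
  surj : ∀ x : P, ∃ (e : ℕ) (m : M), F.φ^[e] x = ι m
  ker : ∀ m, ι m = 0 ↔ ∃ e : ℕ, F₀.φ^[e] m = 0

/-- `ι : M₀ →+ P` exhibits `(P, F)`, an `R[φ]`-module over the perfection `g : R₀ →+* R`,
as the Frobenius perfection `M₀^perf = colim φ_*^e M₀` of the `R₀[φ]`-module `(M₀, F₀)`. -/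
structure IsModPerfection (p : ℕ) {R₀ R : Type} [CommRing R₀] [CommRing R] (g : R₀ →+* R)
    {M₀ : Type} [AddCommGroup M₀] [Module R₀ M₀] (F₀ : FrobMod p R₀ M₀)
    {P : Type} [AddCommGroup P] [Module R P] (F : FrobMod p R P)
    (ι : M₀ →+ P) : Prop where
  bijective : Function.Bijective F.φ
  semilinear : ∀ (a : R₀) (m : M₀), ι (a • m) = g a • ι m
  comm : ∀ m, ι (F₀.φ m) = F.φ (ι m)
  surj : ∀ x : P, ∃ (e : ℕ) (m : M₀), F.φ^[e] x = ι m
  ker : ∀ m, ι m = 0 ↔ ∃ e : ℕ, F₀.φ^[e] m = 0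

/-- Let `(R, m)` be the perfection of a noetherian local `𝔽_p`-algebra
`(R₀, m₀)`. If `M₀` is a non-nilpotent simple `R₀[φ]`-module, then its Frobenius perfection
`M₀^perf` is a nonzero simple `R[φ]`-module. -/
theorem frobPerfection_of_simple_nonNilpotent_isSimple
    {p : ℕ} [Fact p.Prime] {R₀ R : Type} [CommRing R₀] [CommRing R]
    [CharP R₀ p] [CharP R p] [IsNoetherianRing R₀] [IsLocalRing R₀]
    (g : R₀ →+* R) (hg : IsRingPerfection p g)
    {M₀ : Type} [AddCommGroup M₀] [Module R₀ M₀] (F₀ : FrobMod p R₀ M₀)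
    (hnil : ¬ F₀.IsNilpotentMod) (hsimple : F₀.IsSimpleMod)
    {P : Type} [AddCommGroup P] [Module R P] (F : FrobMod p R P) (ι : M₀ →+ P)
    (hperf : IsModPerfection p g F₀ F ι) :
    F.IsSimpleMod := by
  obtain ⟨⟨m₀, hm₀⟩, hsub⟩ := hsimple
  -- iterated semilinearity for F
  have hFiter : ∀ (e : ℕ) (a : R) (x : P), F.φ^[e] (a • x) = a ^ p ^ e • F.φ^[e] x := by
    intro e
    induction e with
    | zero => intro a x; simp
    | succ e ih =>
      intro a x
      rw [Function.iterate_succ_apply, F.semilinear, ih, Function.iterate_succ_apply,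
        ← pow_mul, ← pow_succ']
  -- iterated commutation
  have hcomm : ∀ (e : ℕ) (m : M₀), ι (F₀.φ^[e] m) = F.φ^[e] (ι m) := by
    intro e
    induction e with
    | zero => intro m; simp
    | succ e ih =>
      intro m
      rw [Function.iterate_succ_apply, ih, hperf.comm, ← Function.iterate_succ_apply]
  -- p-power maps on R are surjective
  have hpow : ∀ e : ℕ, Function.Surjective fun a : R => a ^ p ^ e := by
    intro e
    induction e with
    | zero => intro a; exact ⟨a, by simp⟩
    | succ e ih =>
      intro a
      obtain ⟨b, hb⟩ := hg.perfect.2 a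
      obtain ⟨c, hc⟩ := ih b
      have hb' : b ^ p = a := hb
      have hc' : c ^ p ^ e = b := hc
      exact ⟨c, by simp only []; rw [pow_succ, pow_mul, hc', hb']⟩
  -- φ₀ is injective
  have hK : Function.Injective F₀.φ := by
    classical
    let K : Submodule R₀ M₀ :=
      { carrier := {m | F₀.φ m = 0}
        add_mem' := by intro a b ha hb; simp only [Set.mem_setOf_eq] at *; rw [map_add, ha, hb, add_zero]
        zero_mem' := by simp
        smul_mem' := by
          intro a m hm
          simp only [Set.mem_setOf_eq] at *
          rw [F₀.semilinear, hm, smul_zero] }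
    have hKst : F₀.IsStable K := by
      intro m hm
      have hm' : F₀.φ m = 0 := hm
      show F₀.φ (F₀.φ m) = 0
      rw [hm', map_zero]
    rcases hsub K hKst with h | h
    · intro a b hab
      have : a - b ∈ K := by
        simp only [Set.mem_setOf_eq, K, Submodule.mem_mk, AddSubmonoid.mem_mk,
          AddSubsemigroup.mem_mk]
        rw [map_sub, hab, sub_self]
      rw [h] at this
      simpa [sub_eq_zero] using this
    · exfalso
      apply hnil
      refine ⟨1, fun m => ?_⟩
      have : m ∈ K := by rw [h]; trivial
      simpa [K] using this
  -- ι is injective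
  have hι : Function.Injective ι := by
    intro a b hab
    have : ι (a - b) = 0 := by rw [map_sub, hab, sub_self]
    obtain ⟨e, he⟩ := (hperf.ker _).1 this
    have : F₀.φ^[e] (a - b) = F₀.φ^[e] 0 := by
      rw [he]
      simp [iterate_map_zero]
    have := hK.iterate e this
    simpa [sub_eq_zero] using this
  have hφinj : Function.Injective F.φ := hperf.bijective.1
  constructor
  · exact ⟨ι m₀, fun h => hm₀ (hι (by rw [h, map_zero]))⟩
  · intro N hN
    -- N is stable under iterates
    have hNiter : ∀ (e : ℕ) (x : P), x ∈ N → F.φ^[e] x ∈ N := by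
      intro e
      induction e with
      | zero => intro x hx; simpa using hx
      | succ e ih =>
        intro x hx
        rw [Function.iterate_succ_apply']
        exact hN _ (ih x hx)
    -- pull N back to M₀
    classical
    let N₀ : Submodule R₀ M₀ :=
      { carrier := {m | ι m ∈ N}
        add_mem' := by
          intro a b ha hb
          simp only [Set.mem_setOf_eq] at *
          rw [map_add]; exact N.add_mem ha hb
        zero_mem' := by simp
        smul_mem' := by
          intro a m hm
          simp only [Set.mem_setOf_eq] at *
          rw [hperf.semilinear]
          exact N.smul_mem _ hm }
    have hN₀st : F₀.IsStable N₀ := by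
      intro m hm
      have hm' : ι m ∈ N := hm
      show ι (F₀.φ m) ∈ N
      rw [hperf.comm]
      exact hN _ hm'
    rcases hsub N₀ hN₀st with h | h
    · -- N = ⊥
      left
      rw [eq_bot_iff]
      intro x hx
      obtain ⟨e, m, hem⟩ := hperf.surj x
      have hmN : m ∈ N₀ := by
        simp only [Set.mem_setOf_eq, N₀, Submodule.mem_mk, AddSubmonoid.mem_mk,
          AddSubsemigroup.mem_mk]
        rw [← hem]
        exact hNiter e x hx
      rw [h] at hmN
      have hm0 : m = 0 := by simpa using hmN
      have : F.φ^[e] x = F.φ^[e] 0 := by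
        rw [hem, hm0, map_zero]
        simp [iterate_map_zero]
      have := hφinj.iterate e this
      simp [this]
    · -- N = ⊤
      right
      rw [eq_top_iff]
      intro x _
      obtain ⟨e, m, hem⟩ := hperf.surj x
      -- the image submodule φ^[e](N)
      let Ne : Submodule R P :=
        { carrier := F.φ^[e] '' N
          add_mem' := by
            rintro a b ⟨u, hu, rfl⟩ ⟨v, hv, rfl⟩
            exact ⟨u + v, N.add_mem hu hv, by simp [iterate_map_add]⟩
          zero_mem' := ⟨0, N.zero_mem, by simp [iterate_map_zero]⟩
          smul_mem' := by
            rintro a y ⟨u, hu, rfl⟩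
            obtain ⟨b, hb⟩ := hpow e a
            simp only at hb
            exact ⟨b • u, N.smul_mem _ hu, by rw [hFiter, hb]⟩ }
      -- pull Ne back to M₀
      let Ne₀ : Submodule R₀ M₀ :=
        { carrier := {m | ι m ∈ Ne}
          add_mem' := by
            intro a b ha hb
            simp only [Set.mem_setOf_eq] at *
            rw [map_add]; exact Ne.add_mem ha hb
          zero_mem' := by simp
          smul_mem' := by
            intro a m hm
            simp only [Set.mem_setOf_eq] at *
            rw [hperf.semilinear]
            exact Ne.smul_mem _ hm }
      have hNe₀st : F₀.IsStable Ne₀ := by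
        rintro m hm
        have hm' : ι m ∈ Ne := hm
        show ι (F₀.φ m) ∈ Ne
        rw [hperf.comm]
        obtain ⟨u, hu, hu'⟩ := hm'
        exact ⟨F.φ u, hN _ hu, by
          rw [← hu', ← Function.iterate_succ_apply, Function.iterate_succ_apply']⟩
      rcases hsub Ne₀ hNe₀st with h' | h'
      · -- would force uniform nilpotence of M₀
        exfalso
        apply hnil
        refine ⟨e, fun m' => ?_⟩
        have hm'N : ι m' ∈ N := by
          have : m' ∈ N₀ := by rw [h]; trivial
          simpa [N₀] using this
        have : F₀.φ^[e] m' ∈ Ne₀ := by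
          simp only [Set.mem_setOf_eq, Ne₀, Submodule.mem_mk, AddSubmonoid.mem_mk,
            AddSubsemigroup.mem_mk]
          exact ⟨ι m', hm'N, (hcomm e m').symm⟩
        rw [h'] at this
        have h0 : F₀.φ^[e] m' = 0 := by simpa using this
        exact h0
      · -- x ∈ N
        have hmNe : ι m ∈ Ne := by
          have : m ∈ Ne₀ := by rw [h']; trivial
          simpa [Ne₀] using this
        obtain ⟨u, hu, hu'⟩ := hmNe
        have : F.φ^[e] u = F.φ^[e] x := by rw [hu', hem]
        have := hφinj.iterate e this
        rwa [← this]
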